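/- (Severi–Bouligand) Let A ⊆ ℝᵐ, x̂ ∈ A an accumulation point of A, f : A → ℝᵏ continuous at x̂, L : ℝᵐ → ℝᵏ linear. Then f is strictly differentiable at x̂ with strict differential L if and only if the upper paratangent cone of graph(f) at (x̂, f(x̂)) is contained in graph(L). -/

import Mathlib

open Filter Metric Topology

/-- Upper paratangent cone (sequential description) in a normed space. -/
def upperParatangentCone {E : Type*} [NormedAddCommGroup E] [NormedSpace ℝ E]
    (S : Set E) (p : E) : Set E :=
  {w | ∃ (t : ℕ → ℝ) (u v : ℕ → E),
      (∀ n, 0 < t n) ∧ Filter.Tendsto t Filter.atTop (𝓝 0) ∧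
      (∀ n, u n ∈ S) ∧ Filter.Tendsto u Filter.atTop (𝓝 p) ∧
      (∀ n, v n ∈ S) ∧ Filter.Tendsto v Filter.atTop (𝓝 p) ∧
      Filter.Tendsto (fun n => (t n)⁻¹ • (v n - u n)) Filter.atTop (𝓝 w)}

private lemma sb_arith {ε C t F N : ℝ} (hε : 0 < ε) (hC : 0 ≤ C) (ht : 0 < t)
    (h1 : ε * t ≤ N) (h2 : F - C * t ≤ N) :
    min (1/2) (ε / (2*C + 2)) * max t F ≤ N := by
  have hden : (0:ℝ) < 2*C + 2 := by linarith
  have hδpos : 0 < min (1/2) (ε / (2*C + 2)) :=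
    lt_min (by norm_num) (div_pos hε hden)
  have hδ1 : min (1/2) (ε / (2*C + 2)) ≤ 1/2 := min_le_left _ _
  have hδ2 : min (1/2) (ε / (2*C + 2)) * (2*C + 2) ≤ ε := by
    have := min_le_right (1/2) (ε / (2*C + 2))
    calc min (1/2) (ε / (2*C + 2)) * (2*C + 2) ≤ (ε / (2*C + 2)) * (2*C + 2) :=
          mul_le_mul_of_nonneg_right this (le_of_lt hden)
      _ = ε := by field_simp
  set δ := min (1/2) (ε / (2*C + 2)) with hδ
  rcases le_total F t with h | h
  · rw [max_eq_left h]
    have hδε : δ ≤ ε := by nlinarith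
    nlinarith
  · rw [max_eq_right h]
    rcases le_total (C * t) (F / 2) with h3 | h3
    · nlinarith
    · nlinarith

/-- Severi–Bouligand: strict differentiability is equivalent to the inclusion of the
upper paratangent cone of the graph in the graph of `L`. -/
theorem severi_bouligand_strict {m k : ℕ}
    (A : Set (EuclideanSpace ℝ (Fin m)))
    (f : EuclideanSpace ℝ (Fin m) → EuclideanSpace ℝ (Fin k))
    (x : EuclideanSpace ℝ (Fin m)) (hxA : x ∈ A) (hacc : AccPt x (Filter.principal A))
    (hcont : ContinuousWithinAt f A x)
    (L : EuclideanSpace ℝ (Fin m) →ₗ[ℝ] EuclideanSpace ℝ (Fin k)) :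
    Filter.Tendsto
        (fun p : EuclideanSpace ℝ (Fin m) × EuclideanSpace ℝ (Fin m) =>
          ‖p.1 - p.2‖⁻¹ • (f p.1 - f p.2 - L (p.1 - p.2)))
        (𝓝[(A ×ˢ A) ∩ {p | p.1 ≠ p.2}] (x, x)) (𝓝 0) ↔
      upperParatangentCone {p : EuclideanSpace ℝ (Fin m) × EuclideanSpace ℝ (Fin k) |
          p.1 ∈ A ∧ p.2 = f p.1} (x, f x)
        ⊆ {p : EuclideanSpace ℝ (Fin m) × EuclideanSpace ℝ (Fin k) | p.2 = L p.1} := by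
  set g : (EuclideanSpace ℝ (Fin m) × EuclideanSpace ℝ (Fin m)) → EuclideanSpace ℝ (Fin k) :=
    fun p => ‖p.1 - p.2‖⁻¹ • (f p.1 - f p.2 - L (p.1 - p.2)) with hgdef
  set L' : EuclideanSpace ℝ (Fin m) →L[ℝ] EuclideanSpace ℝ (Fin k) :=
    LinearMap.toContinuousLinearMap L with hL'
  have hL'app : ∀ z, L' z = L z := fun z => rfl
  constructor
  · -- strict differentiability ⇒ cone inclusion
    intro h w hw
    obtain ⟨t, u, v, ht0, htlim, hu, hulim, hv, hvlim, hwlim⟩ := hw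
    set a : ℕ → EuclideanSpace ℝ (Fin m) := fun n => (u n).1 with ha
    set b : ℕ → EuclideanSpace ℝ (Fin m) := fun n => (v n).1 with hb
    have haA : ∀ n, a n ∈ A := fun n => (hu n).1
    have hbA : ∀ n, b n ∈ A := fun n => (hv n).1
    have hua : ∀ n, (u n).2 = f (a n) := fun n => (hu n).2
    have hvb : ∀ n, (v n).2 = f (b n) := fun n => (hv n).2
    -- component limits
    have h1 : Tendsto (fun n => (t n)⁻¹ • (b n - a n)) atTop (𝓝 w.1) := by
      have := ((continuous_fst.tendsto w).comp hwlim)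
      exact this
    have h2 : Tendsto (fun n => (t n)⁻¹ • (f (b n) - f (a n))) atTop (𝓝 w.2) := by
      have := ((continuous_snd.tendsto w).comp hwlim)
      refine this.congr fun n => ?_
      simp [Function.comp, hua n, hvb n]
    have halim : Tendsto a atTop (𝓝 x) := by
      have := ((continuous_fst.tendsto (x, f x)).comp hulim); exact this
    have hblim : Tendsto b atTop (𝓝 x) := by
      have := ((continuous_fst.tendsto (x, f x)).comp hvlim); exact this
    -- inner quotient tends to zero
    have hginner : Tendsto (fun n => g (b n, a n)) atTop (𝓝 0) := by
      rw [NormedAddCommGroup.tendsto_nhds_zero]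
      intro ε hε
      have h' : ∀ᶠ p in 𝓝[(A ×ˢ A) ∩ {p : EuclideanSpace ℝ (Fin m) × EuclideanSpace ℝ (Fin m) | p.1 ≠ p.2}] (x, x), ‖g p‖ < ε :=
        (NormedAddCommGroup.tendsto_nhds_zero.mp h) ε hε
      rw [eventually_nhdsWithin_iff] at h'
      have hpair : Tendsto (fun n => (b n, a n)) atTop (𝓝 (x, x)) :=
        hblim.prodMk_nhds halim
      filter_upwards [hpair.eventually h'] with n hn
      by_cases hab : b n = a n
      · simp [hgdef, hab, hε]
      · exact hn ⟨⟨hbA n, haA n⟩, hab⟩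
    have hc : Tendsto (fun n => (t n)⁻¹ * ‖b n - a n‖) atTop (𝓝 ‖w.1‖) := by
      have := h1.norm
      refine this.congr fun n => ?_
      rw [norm_smul, Real.norm_eq_abs, abs_of_pos (inv_pos.2 (ht0 n))]
    have hgseq : Tendsto (fun n => (t n)⁻¹ • (f (b n) - f (a n) - L (b n - a n)))
        atTop (𝓝 0) := by
      have key : (fun n => (t n)⁻¹ • (f (b n) - f (a n) - L (b n - a n)))
          = fun n => ((t n)⁻¹ * ‖b n - a n‖) • g (b n, a n) := by
        funext n
        by_cases hab : b n = a n
        · simp [hgdef, hab]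
        · have hnz : ‖b n - a n‖ ≠ 0 := by
            simpa [sub_eq_zero] using hab
          simp only [hgdef]
          rw [smul_smul, mul_assoc, mul_inv_cancel₀ hnz, mul_one]
      rw [key]
      have := hc.smul hginner
      simpa using this
    -- conclude
    have hfin : Tendsto (fun n => (t n)⁻¹ • (f (b n) - f (a n) - L (b n - a n)))
        atTop (𝓝 (w.2 - L w.1)) := by
      have hL1 : Tendsto (fun n => L ((t n)⁻¹ • (b n - a n))) atTop (𝓝 (L w.1)) := by
        have := (L'.continuous.tendsto w.1).comp h1
        exact this
      have hL2 : Tendsto (fun n => (t n)⁻¹ • L (b n - a n)) atTop (𝓝 (L w.1)) := by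
        refine hL1.congr fun n => ?_
        show L ((t n)⁻¹ • (b n - a n)) = _
        rw [map_smul]
      have := h2.sub hL2
      refine this.congr fun n => ?_
      rw [← smul_sub, sub_sub]
    have := tendsto_nhds_unique hfin hgseq
    have : w.2 = L w.1 := by rwa [sub_eq_zero] at this
    exact this
  · -- cone inclusion ⇒ strict differentiability
    intro hcone
    by_contra hnot
    rw [Filter.tendsto_iff_seq_tendsto] at hnot
    push_neg at hnot
    obtain ⟨p, hp, hnp⟩ := hnot
    have hpS : ∀ᶠ n in atTop, p n ∈ (A ×ˢ A) ∩ {q : EuclideanSpace ℝ (Fin m) × EuclideanSpace ℝ (Fin m) | q.1 ≠ q.2} :=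
      hp.eventually eventually_mem_nhdsWithin
    have hpx : Tendsto p atTop (𝓝 (x, x)) := hp.mono_right nhdsWithin_le_nhds
    have hex : ∃ ε > 0, ∃ᶠ n in atTop, ε ≤ ‖g (p n)‖ := by
      by_contra hcon
      push_neg at hcon
      apply hnp
      rw [NormedAddCommGroup.tendsto_nhds_zero]
      intro ε hε
      have := hcon ε hε
      filter_upwards [this] with n hn
      simpa [not_le] using hn
    obtain ⟨ε, hε, hfreq⟩ := hex
    obtain ⟨φ, hφ, hφ2⟩ := Filter.extraction_of_frequently_atTop (hfreq.and_eventually hpS)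
    set a : ℕ → EuclideanSpace ℝ (Fin m) := fun n => (p (φ n)).1 with ha
    set b : ℕ → EuclideanSpace ℝ (Fin m) := fun n => (p (φ n)).2 with hb
    have haA : ∀ n, a n ∈ A := fun n => ((hφ2 n).2.1).1
    have hbA : ∀ n, b n ∈ A := fun n => ((hφ2 n).2.1).2
    have hab : ∀ n, a n ≠ b n := fun n => (hφ2 n).2.2
    have hgε : ∀ n, ε ≤ ‖g (a n, b n)‖ := fun n => (hφ2 n).1
    have hr : Tendsto (p ∘ φ) atTop (𝓝 (x, x)) := hpx.comp hφ.tendsto_atTop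
    have halim : Tendsto a atTop (𝓝 x) := by
      have := (continuous_fst.tendsto (x, x)).comp hr; exact this
    have hblim : Tendsto b atTop (𝓝 x) := by
      have := (continuous_snd.tendsto (x, x)).comp hr; exact this
    have hfalim : Tendsto (fun n => f (a n)) atTop (𝓝 (f x)) :=
      hcont.tendsto.comp (tendsto_nhdsWithin_iff.mpr ⟨halim, Eventually.of_forall haA⟩)
    have hfblim : Tendsto (fun n => f (b n)) atTop (𝓝 (f x)) :=
      hcont.tendsto.comp (tendsto_nhdsWithin_iff.mpr ⟨hblim, Eventually.of_forall hbA⟩)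
    -- rescaled unit vectors
    set W : ℕ → EuclideanSpace ℝ (Fin m) × EuclideanSpace ℝ (Fin k) := fun n => (a n - b n, f (a n) - f (b n)) with hW
    set T : ℕ → ℝ := fun n => ‖W n‖ with hT
    have hT0 : ∀ n, 0 < T n := by
      intro n
      rw [hT]
      simp only [norm_pos_iff]
      intro hWz
      have : a n - b n = 0 := congrArg Prod.fst hWz
      exact hab n (by rwa [sub_eq_zero] at this)
    have hTlim : Tendsto T atTop (𝓝 0) := by
      have hW0 : Tendsto W atTop (𝓝 (0 : EuclideanSpace ℝ (Fin m) × EuclideanSpace ℝ (Fin k))) := by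
        have : Tendsto W atTop (𝓝 (x - x, f x - f x)) :=
          (halim.sub hblim).prodMk_nhds (hfalim.sub hfblim)
        rw [sub_self, sub_self] at this
        exact this
      simpa using hW0.norm
    set e : ℕ → EuclideanSpace ℝ (Fin m) × EuclideanSpace ℝ (Fin k) := fun n => (T n)⁻¹ • W n with he
    have hesph : ∀ n, e n ∈ sphere (0 : EuclideanSpace ℝ (Fin m) × EuclideanSpace ℝ (Fin k)) 1 := by
      intro n
      rw [mem_sphere_zero_iff_norm, he]
      simp only [norm_smul, Real.norm_eq_abs, abs_of_pos (inv_pos.2 (hT0 n))]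
      exact inv_mul_cancel₀ (ne_of_gt (hT0 n))
    obtain ⟨c, hcsph, ψ, hψ, hce⟩ := (isCompact_sphere (0 : EuclideanSpace ℝ (Fin m) × EuclideanSpace ℝ (Fin k)) 1).tendsto_subseq hesph
    -- c belongs to the paratangent cone of the graph
    have hcc : c ∈ upperParatangentCone
        {q : EuclideanSpace ℝ (Fin m) × EuclideanSpace ℝ (Fin k) | q.1 ∈ A ∧ q.2 = f q.1} (x, f x) := by
      refine ⟨T ∘ ψ, fun n => (b (ψ n), f (b (ψ n))), fun n => (a (ψ n), f (a (ψ n))),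
        fun n => hT0 (ψ n), hTlim.comp hψ.tendsto_atTop,
        fun n => ⟨hbA (ψ n), rfl⟩,
        (hblim.comp hψ.tendsto_atTop).prodMk_nhds (hfblim.comp hψ.tendsto_atTop),
        fun n => ⟨haA (ψ n), rfl⟩,
        (halim.comp hψ.tendsto_atTop).prodMk_nhds (hfalim.comp hψ.tendsto_atTop), ?_⟩
      refine hce.congr fun n => ?_
      show (T (ψ n))⁻¹ • W (ψ n) = _
      rw [Prod.mk_sub_mk]
      rfl
    have hc2 : c.2 = L c.1 := hcone hcc
    -- derive contradiction
    set C := ‖L'‖ with hCdef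
    have hCnn : 0 ≤ C := norm_nonneg _
    set δ := min (1/2 : ℝ) (ε / (2*C + 2)) with hδ
    have hδpos : 0 < δ :=
      lt_min (by norm_num) (div_pos hε (by linarith))
    have hlow : ∀ n, δ ≤ ‖(e (ψ n)).2 - L ((e (ψ n)).1)‖ := by
      intro n
      set j := ψ n
      have htj : 0 < ‖a j - b j‖ := by
        rw [norm_pos_iff, sub_ne_zero]; exact hab j
      have hN1 : ε * ‖a j - b j‖ ≤ ‖f (a j) - f (b j) - L (a j - b j)‖ := by
        have := hgε j
        rw [hgdef] at this
        simp only [norm_smul, Real.norm_eq_abs, abs_of_pos (inv_pos.2 htj)] at this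
        calc ε * ‖a j - b j‖ ≤ ‖a j - b j‖⁻¹ * ‖f (a j) - f (b j) - L (a j - b j)‖ * ‖a j - b j‖ :=
              mul_le_mul_of_nonneg_right this (le_of_lt htj)
          _ = ‖f (a j) - f (b j) - L (a j - b j)‖ := by
              field_simp
      have hN2 : ‖f (a j) - f (b j)‖ - C * ‖a j - b j‖ ≤
          ‖f (a j) - f (b j) - L (a j - b j)‖ := by
        have hLe : ‖L (a j - b j)‖ ≤ C * ‖a j - b j‖ := by
          have := L'.le_opNorm (a j - b j)
          simpa [hL'app] using this
        have := norm_sub_norm_le (f (a j) - f (b j)) (L (a j - b j))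
        linarith [this]
      have harith := sb_arith hε hCnn htj hN1 hN2
      have hTj : T j = max ‖a j - b j‖ ‖f (a j) - f (b j)‖ := by
        show ‖W j‖ = _
        rw [Prod.norm_def]
      have hnorm : ‖(e j).2 - L ((e j).1)‖ =
          (T j)⁻¹ * ‖f (a j) - f (b j) - L (a j - b j)‖ := by
        have : (e j).2 - L ((e j).1) = (T j)⁻¹ • (f (a j) - f (b j) - L (a j - b j)) := by
          simp only [he, hW, Prod.smul_fst, Prod.smul_snd, map_smul, ← smul_sub]
        rw [this, norm_smul, Real.norm_eq_abs, abs_of_pos (inv_pos.2 (hT0 j))]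
      rw [hnorm, ← div_eq_inv_mul]
      rw [le_div_iff₀ (hT0 j)]
      calc δ * T j = δ * max ‖a j - b j‖ ‖f (a j) - f (b j)‖ := by rw [hTj]
        _ ≤ _ := harith
    have hlim0 : Tendsto (fun n => ‖(e (ψ n)).2 - L ((e (ψ n)).1)‖) atTop (𝓝 0) := by
      have h1 : Tendsto (fun n => (e (ψ n)).2) atTop (𝓝 c.2) :=
        (continuous_snd.tendsto c).comp hce
      have h2 : Tendsto (fun n => L ((e (ψ n)).1)) atTop (𝓝 (L c.1)) := by
        have := (L'.continuous.tendsto c.1).comp ((continuous_fst.tendsto c).comp hce)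
        exact this
      have := (h1.sub h2).norm
      rw [hc2] at this
      simpa using this
    have : δ ≤ 0 := ge_of_tendsto hlim0 (Eventually.of_forall hlow)
    linarith
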